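/- For λ = 2, F(ψ) = k/sin²(2ψ), G(ψ) = cos(2ψ), the function I₂ = (p_r + (1/(2r)) X_L)² G is a polynomial in the momenta and satisfies {H, I₂} = 0 where H = ½p_r² + (1/r²)(½p_ψ² + F(ψ)). -/

import Mathlib

open Real

/- Phase space coordinates: `x 0 = r`, `x 1 = ψ`, `x 2 = p_r`, `x 3 = p_ψ`. -/

/-- Partial derivative with respect to the `i`-th coordinate. -/
noncomputable def pd (i : Fin 4) (f : (Fin 4 → ℝ) → ℝ) (x : Fin 4 → ℝ) : ℝ :=
  deriv (fun t => f (Function.update x i t)) (x i)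

/-- The angular Hamiltonian `L = ½ p_ψ² + F(ψ)`. -/
noncomputable def Lfun (F : ℝ → ℝ) (x : Fin 4 → ℝ) : ℝ :=
  (1/2) * (x 3)^2 + F (x 1)

/-- The Hamiltonian vector field `X_L = p_ψ ∂/∂ψ − F'(ψ) ∂/∂p_ψ` as an operator. -/
noncomputable def XL (F : ℝ → ℝ) (f : (Fin 4 → ℝ) → ℝ) (x : Fin 4 → ℝ) : ℝ :=
  x 3 * pd 1 f x - deriv F (x 1) * pd 3 f x

/-- The Hamiltonian `H = ½ p_r² + (½ p_ψ² + F(ψ))/r²`. -/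
noncomputable def Hfun (F : ℝ → ℝ) (x : Fin 4 → ℝ) : ℝ :=
  (1/2) * (x 2)^2 + (1 / (x 0)^2) * ((1/2) * (x 3)^2 + F (x 1))

/-- The operator `U = p_r + (μ/r) X_L` (multiplication by `p_r` plus `(μ/r)·X_L`). -/
noncomputable def Uop (μ : ℝ) (F : ℝ → ℝ) (f : (Fin 4 → ℝ) → ℝ) (x : Fin 4 → ℝ) : ℝ :=
  x 2 * f x + (μ / x 0) * XL F f x

/-- Standard Poisson bracket on the phase space `(r, ψ, p_r, p_ψ)`. -/
noncomputable def poisson (f g : (Fin 4 → ℝ) → ℝ) (x : Fin 4 → ℝ) : ℝ :=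
  (pd 0 f x * pd 2 g x - pd 2 f x * pd 0 g x) +
  (pd 1 f x * pd 3 g x - pd 3 f x * pd 1 g x)

/-! ### Auxiliary material -/

lemma hd_sin2 (t : ℝ) : HasDerivAt (fun t : ℝ => sin (2*t)) (2 * cos (2*t)) t := by
  simpa [mul_comm] using ((hasDerivAt_id t).const_mul 2).sin

lemma hd_cos2 (t : ℝ) : HasDerivAt (fun t : ℝ => cos (2*t)) (-2 * sin (2*t)) t := by
  simpa [mul_comm] using ((hasDerivAt_id t).const_mul 2).cos

lemma hd_F (k ψ : ℝ) (h : sin (2*ψ) ≠ 0) :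
    HasDerivAt (fun ψ => k / (sin (2*ψ))^2) (-4*k*cos (2*ψ)/(sin (2*ψ))^3) ψ := by
  have h2 : HasDerivAt (fun t : ℝ => (sin (2*t))^2)
      ((2:ℕ) * (sin (2*ψ))^1 * (2 * cos (2*ψ))) ψ := (hd_sin2 ψ).pow 2
  have := (hasDerivAt_const ψ k).div h2 (pow_ne_zero 2 h)
  refine this.congr_deriv ?_
  rw [div_eq_div_iff (pow_ne_zero 2 (pow_ne_zero 2 h)) (pow_ne_zero 3 h)]
  push_cast
  ring

/-- `U G` in closed form. -/
noncomputable def Afun (y : Fin 4 → ℝ) : ℝ :=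
  y 2 * cos (2 * y 1) - y 3 * sin (2 * y 1) / y 0

/-- `I₂ = U (U G)` in closed form. -/
noncomputable def Ifun (k : ℝ) (y : Fin 4 → ℝ) : ℝ :=
  y 2^2 * cos (2*y 1) - 2*y 2*y 3*sin (2*y 1)/y 0 - y 3^2*cos (2*y 1)/(y 0)^2
    - 2*k*cos (2*y 1)/((y 0)^2*(sin (2*y 1))^2)

lemma UG_eq (k : ℝ) :
    Uop (1/2) (fun ψ => k / (sin (2*ψ))^2) (fun z => cos (2 * z 1)) = Afun := by
  funext y
  unfold Uop XL pd Afun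
  simp only [Function.update_apply, show ((1:Fin 4) = 1) = True by simp,
    show ((3:Fin 4) = 1) = False by decide, show ((1:Fin 4) = 3) = False by decide,
    if_true, if_false]
  rw [(hd_cos2 (y 1)).deriv, deriv_const]
  rcases eq_or_ne (y 0) 0 with h | h
  · simp [h]
  · field_simp
    ring

lemma pdA1 (y : Fin 4 → ℝ) :
    pd 1 Afun y = -2 * y 2 * sin (2*y 1) - 2 * y 3 * cos (2*y 1) / y 0 := by
  unfold pd Afun
  simp only [Function.update_apply, show ((2:Fin 4) = 1) = False by decide,
    show ((3:Fin 4) = 1) = False by decide, show ((0:Fin 4) = 1) = False by decide,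
    if_false, if_true]
  erw [(((hd_cos2 (y 1)).const_mul (y 2)).sub
      (((hd_sin2 (y 1)).const_mul (y 3)).div_const (y 0))).deriv]
  ring

lemma pdA3 (y : Fin 4 → ℝ) : pd 3 Afun y = -(sin (2*y 1) / y 0) := by
  unfold pd Afun
  simp only [Function.update_apply, show ((2:Fin 4) = 3) = False by decide,
    show ((1:Fin 4) = 3) = False by decide, show ((0:Fin 4) = 3) = False by decide,
    show ((3:Fin 4) = 3) = True by simp, if_false, if_true]
  have H : HasDerivAt (fun t : ℝ => y 2 * cos (2*y 1) - t * sin (2*y 1) / y 0)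
      (0 - 1 * sin (2*y 1) / y 0) (y 3) :=
    (hasDerivAt_const (y 3) (y 2 * cos (2*y 1))).sub
      (((hasDerivAt_id (y 3)).mul_const (sin (2*y 1))).div_const (y 0))
  rw [H.deriv]
  ring

lemma I2_eq (k : ℝ) (y : Fin 4 → ℝ) (h0 : y 0 ≠ 0) (h1 : sin (2*y 1) ≠ 0) :
    Uop (1/2) (fun ψ => k / (sin (2*ψ))^2)
        (Uop (1/2) (fun ψ => k / (sin (2*ψ))^2) (fun z => cos (2 * z 1))) y
      = Ifun k y := by
  rw [UG_eq]
  unfold Uop XL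
  rw [pdA1, pdA3, (hd_F k (y 1) h1).deriv]
  unfold Afun Ifun
  field_simp
  ring

section pdI
variable (k : ℝ) (x : Fin 4 → ℝ)

lemma pdI0 (hr : x 0 ≠ 0) (hs : sin (2*x 1) ≠ 0) :
    pd 0 (Ifun k) x = 2*x 2*x 3*sin (2*x 1)/(x 0)^2 + 2*(x 3)^2*cos (2*x 1)/(x 0)^3
      + 4*k*cos (2*x 1)/((x 0)^3*(sin (2*x 1))^2) := by
  unfold pd Ifun
  simp only [Function.update_apply, show ((2:Fin 4) = 0) = False by decide,
    show ((1:Fin 4) = 0) = False by decide, show ((3:Fin 4) = 0) = False by decide,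
    show ((0:Fin 4) = 0) = True by simp, if_false, if_true]
  have H : HasDerivAt (fun t : ℝ => x 2^2 * cos (2*x 1) - 2*x 2*x 3*sin (2*x 1)/t
      - x 3^2*cos (2*x 1)/t^2 - 2*k*cos (2*x 1)/(t^2*(sin (2*x 1))^2))
      (0 - (0 * x 0 - 2*x 2*x 3*sin (2*x 1) * 1)/(x 0)^2
        - (0 * (x 0)^2 - x 3^2*cos (2*x 1) * ((2:ℕ) * (x 0)^1))/((x 0)^2)^2
        - (0 * ((x 0)^2*(sin (2*x 1))^2) - 2*k*cos (2*x 1) * ((2:ℕ) * (x 0)^1 * (sin (2*x 1))^2))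
            /((x 0)^2*(sin (2*x 1))^2)^2) (x 0) :=
    (((hasDerivAt_const (x 0) _).sub
        ((hasDerivAt_const (x 0) _).div (hasDerivAt_id (x 0)) hr)).sub
      ((hasDerivAt_const (x 0) _).div (hasDerivAt_pow 2 (x 0)) (pow_ne_zero 2 hr))).sub
      ((hasDerivAt_const (x 0) _).div ((hasDerivAt_pow 2 (x 0)).mul_const ((sin (2*x 1))^2))
        (mul_ne_zero (pow_ne_zero 2 hr) (pow_ne_zero 2 hs)))
  rw [H.deriv]
  field_simp
  ring

lemma pdI1 (hr : x 0 ≠ 0) (hs : sin (2*x 1) ≠ 0) :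
    pd 1 (Ifun k) x = -2*(x 2)^2*sin (2*x 1) - 4*x 2*x 3*cos (2*x 1)/x 0
      + 2*(x 3)^2*sin (2*x 1)/(x 0)^2 + 4*k/((x 0)^2*sin (2*x 1))
      + 8*k*(cos (2*x 1))^2/((x 0)^2*(sin (2*x 1))^3) := by
  unfold pd Ifun
  simp only [Function.update_apply, show ((2:Fin 4) = 1) = False by decide,
    show ((0:Fin 4) = 1) = False by decide, show ((3:Fin 4) = 1) = False by decide,
    show ((1:Fin 4) = 1) = True by simp, if_false, if_true]
  have H : HasDerivAt (fun t : ℝ => x 2^2 * cos (2*t) - 2*x 2*x 3*sin (2*t)/x 0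
      - x 3^2*cos (2*t)/(x 0)^2 - 2*k*cos (2*t)/((x 0)^2*(sin (2*t))^2))
      (x 2^2 * (-2 * sin (2*x 1)) - 2*x 2*x 3 * (2 * cos (2*x 1))/x 0
        - x 3^2 * (-2 * sin (2*x 1))/(x 0)^2
        - ((2*k * (-2 * sin (2*x 1))) * ((x 0)^2*(sin (2*x 1))^2)
            - 2*k*cos (2*x 1) * ((x 0)^2 * ((2:ℕ) * (sin (2*x 1))^1 * (2 * cos (2*x 1)))))
            /((x 0)^2*(sin (2*x 1))^2)^2) (x 1) :=
    ((((hd_cos2 (x 1)).const_mul (x 2^2)).sub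
        (((hd_sin2 (x 1)).const_mul (2*x 2*x 3)).div_const (x 0))).sub
      (((hd_cos2 (x 1)).const_mul (x 3^2)).div_const ((x 0)^2))).sub
      (((hd_cos2 (x 1)).const_mul (2*k)).div (((hd_sin2 (x 1)).pow 2).const_mul ((x 0)^2))
        (mul_ne_zero (pow_ne_zero 2 hr) (pow_ne_zero 2 hs)))
  rw [H.deriv]
  field_simp
  ring

lemma pdI2 : pd 2 (Ifun k) x = 2*x 2*cos (2*x 1) - 2*x 3*sin (2*x 1)/x 0 := by
  unfold pd Ifun
  simp only [Function.update_apply, show ((0:Fin 4) = 2) = False by decide,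
    show ((1:Fin 4) = 2) = False by decide, show ((3:Fin 4) = 2) = False by decide,
    show ((2:Fin 4) = 2) = True by simp, if_false, if_true]
  have H : HasDerivAt (fun t : ℝ => t^2 * cos (2*x 1) - 2*t*x 3*sin (2*x 1)/x 0
      - x 3^2*cos (2*x 1)/(x 0)^2 - 2*k*cos (2*x 1)/((x 0)^2*(sin (2*x 1))^2))
      ((2:ℕ) * (x 2)^1 * cos (2*x 1) - 2*1*x 3*sin (2*x 1)/x 0 - 0 - 0) (x 2) :=
    ((((hasDerivAt_pow 2 (x 2)).mul_const (cos (2*x 1))).sub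
        (((((hasDerivAt_id (x 2)).const_mul 2).mul_const (x 3)).mul_const
          (sin (2*x 1))).div_const (x 0))).sub
      (hasDerivAt_const (x 2) _)).sub (hasDerivAt_const (x 2) _)
  rw [H.deriv]
  ring

lemma pdI3 : pd 3 (Ifun k) x = -2*x 2*sin (2*x 1)/x 0 - 2*x 3*cos (2*x 1)/(x 0)^2 := by
  unfold pd Ifun
  simp only [Function.update_apply, show ((0:Fin 4) = 3) = False by decide,
    show ((1:Fin 4) = 3) = False by decide, show ((2:Fin 4) = 3) = False by decide,
    show ((3:Fin 4) = 3) = True by simp, if_false, if_true]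
  have H : HasDerivAt (fun t : ℝ => x 2^2 * cos (2*x 1) - 2*x 2*t*sin (2*x 1)/x 0
      - t^2*cos (2*x 1)/(x 0)^2 - 2*k*cos (2*x 1)/((x 0)^2*(sin (2*x 1))^2))
      (0 - 2*x 2*1*sin (2*x 1)/x 0 - (2:ℕ) * (x 3)^1*cos (2*x 1)/(x 0)^2 - 0) (x 3) :=
    (((hasDerivAt_const (x 3) _).sub
        ((((hasDerivAt_id (x 3)).const_mul (2*x 2)).mul_const
          (sin (2*x 1))).div_const (x 0))).sub
      (((hasDerivAt_pow 2 (x 3)).mul_const (cos (2*x 1))).div_const ((x 0)^2))).sub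
      (hasDerivAt_const (x 3) _)
  rw [H.deriv]
  ring

end pdI

section pdH
variable (k : ℝ) (x : Fin 4 → ℝ)

lemma pdH0 (hr : x 0 ≠ 0) :
    pd 0 (Hfun (fun ψ => k / (sin (2*ψ))^2)) x
      = -2*((1/2)*(x 3)^2 + k/(sin (2*x 1))^2)/(x 0)^3 := by
  unfold pd Hfun
  simp only [Function.update_apply, show ((2:Fin 4) = 0) = False by decide,
    show ((1:Fin 4) = 0) = False by decide, show ((3:Fin 4) = 0) = False by decide,
    show ((0:Fin 4) = 0) = True by simp, if_false, if_true]
  have H : HasDerivAt (fun t : ℝ => (1/2)*(x 2)^2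
      + (1/t^2) * ((1/2)*(x 3)^2 + k/(sin (2*x 1))^2))
      (0 + ((0 * (x 0)^2 - 1 * ((2:ℕ) * (x 0)^1))/((x 0)^2)^2)
        * ((1/2)*(x 3)^2 + k/(sin (2*x 1))^2)) (x 0) :=
    (hasDerivAt_const (x 0) _).add
      (((hasDerivAt_const (x 0) 1).div (hasDerivAt_pow 2 (x 0))
        (pow_ne_zero 2 hr)).mul_const _)
  rw [H.deriv]
  field_simp
  ring

lemma pdH1 (hs : sin (2*x 1) ≠ 0) :
    pd 1 (Hfun (fun ψ => k / (sin (2*ψ))^2)) x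
      = (1/(x 0)^2) * (-4*k*cos (2*x 1)/(sin (2*x 1))^3) := by
  unfold pd Hfun
  simp only [Function.update_apply, show ((2:Fin 4) = 1) = False by decide,
    show ((0:Fin 4) = 1) = False by decide, show ((3:Fin 4) = 1) = False by decide,
    show ((1:Fin 4) = 1) = True by simp, if_false, if_true]
  have H : HasDerivAt (fun t : ℝ => (1/2)*(x 2)^2
      + (1/(x 0)^2) * ((1/2)*(x 3)^2 + k/(sin (2*t))^2))
      (0 + (1/(x 0)^2) * (0 + -4*k*cos (2*x 1)/(sin (2*x 1))^3)) (x 1) :=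
    (hasDerivAt_const (x 1) _).add
      (((hasDerivAt_const (x 1) _).add (hd_F k (x 1) hs)).const_mul _)
  rw [H.deriv]
  ring

lemma pdH2 : pd 2 (Hfun (fun ψ => k / (sin (2*ψ))^2)) x = x 2 := by
  unfold pd Hfun
  simp only [Function.update_apply, show ((0:Fin 4) = 2) = False by decide,
    show ((1:Fin 4) = 2) = False by decide, show ((3:Fin 4) = 2) = False by decide,
    show ((2:Fin 4) = 2) = True by simp, if_false, if_true]
  have H : HasDerivAt (fun t : ℝ => (1/2)*t^2
      + (1/(x 0)^2) * ((1/2)*(x 3)^2 + k/(sin (2*x 1))^2))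
      ((1/2) * ((2:ℕ) * (x 2)^1) + 0) (x 2) :=
    ((hasDerivAt_pow 2 (x 2)).const_mul (1/2)).add (hasDerivAt_const (x 2) _)
  rw [H.deriv]
  ring

lemma pdH3 : pd 3 (Hfun (fun ψ => k / (sin (2*ψ))^2)) x = x 3/(x 0)^2 := by
  unfold pd Hfun
  simp only [Function.update_apply, show ((0:Fin 4) = 3) = False by decide,
    show ((1:Fin 4) = 3) = False by decide, show ((2:Fin 4) = 3) = False by decide,
    show ((3:Fin 4) = 3) = True by simp, if_false, if_true]
  have H : HasDerivAt (fun t : ℝ => (1/2)*(x 2)^2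
      + (1/(x 0)^2) * ((1/2)*t^2 + k/(sin (2*x 1))^2))
      (0 + (1/(x 0)^2) * ((1/2) * ((2:ℕ) * (x 3)^1) + 0)) (x 3) :=
    (hasDerivAt_const (x 3) _).add
      ((((hasDerivAt_pow 2 (x 3)).const_mul (1/2)).add (hasDerivAt_const (x 3) _)).const_mul _)
  rw [H.deriv]
  ring

end pdH

section transfer
variable (k : ℝ) (x : Fin 4 → ℝ)

lemma pdT0 (hr : 0 < x 0) (hs : sin (2*x 1) ≠ 0) :
    pd 0 (Uop (1/2) (fun ψ => k / (sin (2*ψ))^2)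
      (Uop (1/2) (fun ψ => k / (sin (2*ψ))^2) (fun z => cos (2 * z 1)))) x
      = pd 0 (Ifun k) x := by
  unfold pd
  apply Filter.EventuallyEq.deriv_eq
  filter_upwards [eventually_ne_nhds (ne_of_gt hr)] with t ht
  apply I2_eq
  · simpa using ht
  · simpa using hs

lemma pdT1 (hr : 0 < x 0) (hs : sin (2*x 1) ≠ 0) :
    pd 1 (Uop (1/2) (fun ψ => k / (sin (2*ψ))^2)
      (Uop (1/2) (fun ψ => k / (sin (2*ψ))^2) (fun z => cos (2 * z 1)))) x
      = pd 1 (Ifun k) x := by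
  unfold pd
  apply Filter.EventuallyEq.deriv_eq
  have hc : ContinuousAt (fun t : ℝ => sin (2*t)) (x 1) := by fun_prop
  filter_upwards [hc.eventually_ne hs] with t ht
  apply I2_eq
  · simpa using (ne_of_gt hr)
  · simpa using ht

lemma pdT2 (hr : 0 < x 0) (hs : sin (2*x 1) ≠ 0) :
    pd 2 (Uop (1/2) (fun ψ => k / (sin (2*ψ))^2)
      (Uop (1/2) (fun ψ => k / (sin (2*ψ))^2) (fun z => cos (2 * z 1)))) x
      = pd 2 (Ifun k) x := by
  unfold pd
  congr 1
  funext t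
  apply I2_eq
  · simpa using (ne_of_gt hr)
  · simpa using hs

lemma pdT3 (hr : 0 < x 0) (hs : sin (2*x 1) ≠ 0) :
    pd 3 (Uop (1/2) (fun ψ => k / (sin (2*ψ))^2)
      (Uop (1/2) (fun ψ => k / (sin (2*ψ))^2) (fun z => cos (2 * z 1)))) x
      = pd 3 (Ifun k) x := by
  unfold pd
  congr 1
  funext t
  apply I2_eq
  · simpa using (ne_of_gt hr)
  · simpa using hs

end transfer

/-- For `λ = 2`, `F(ψ) = k/sin²(2ψ)`, `G(ψ) = cos(2ψ)`, the function
`I₂ = (p_r + (1/(2r))X_L)² G` is a polynomial in the momenta and satisfies `{H, I₂} = 0`. -/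
theorem first_integral_lambda_two (k : ℝ) (x : Fin 4 → ℝ)
    (hr : 0 < x 0) (hs : sin (2 * x 1) ≠ 0) :
    (∃ c : ℕ → ℕ → ℝ → ℝ → ℝ, ∀ y : Fin 4 → ℝ, 0 < y 0 → sin (2 * y 1) ≠ 0 →
      Uop (1/2) (fun ψ => k / (sin (2*ψ))^2)
          (Uop (1/2) (fun ψ => k / (sin (2*ψ))^2) (fun z => cos (2 * z 1))) y
        = ∑ i ∈ Finset.range 3, ∑ j ∈ Finset.range 3,
            c i j (y 0) (y 1) * (y 2)^i * (y 3)^j) ∧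
    poisson (Hfun (fun ψ => k / (sin (2*ψ))^2))
      (Uop (1/2) (fun ψ => k / (sin (2*ψ))^2)
        (Uop (1/2) (fun ψ => k / (sin (2*ψ))^2) (fun z => cos (2 * z 1)))) x = 0 := by
  constructor
  · refine ⟨fun i j r ψ =>
      if i = 2 ∧ j = 0 then cos (2*ψ)
      else if i = 1 ∧ j = 1 then -2*sin (2*ψ)/r
      else if i = 0 ∧ j = 2 then -cos (2*ψ)/r^2
      else if i = 0 ∧ j = 0 then -2*k*cos (2*ψ)/(r^2*(sin (2*ψ))^2)
      else 0, ?_⟩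
    intro y hy0 hy1
    rw [I2_eq k y (ne_of_gt hy0) hy1]
    simp only [Finset.sum_range_succ, Finset.sum_range_zero]
    norm_num [Ifun]
    ring
  · unfold poisson
    rw [pdT0 k x hr hs, pdT1 k x hr hs, pdT2 k x hr hs, pdT3 k x hr hs,
      pdI0 k x (ne_of_gt hr) hs, pdI1 k x (ne_of_gt hr) hs, pdI2, pdI3,
      pdH0 k x (ne_of_gt hr), pdH1 k x hs, pdH2, pdH3]
    field_simp
    ring
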